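/- In the quasi-consecutive pattern poset, suppose σ occurs precisely once in τ = a_1 a_2 ⋯ a_n, the occurrence involves a_n but not a_1 and a_2. Then μ(σ, τ) = 0 unless [σ, τ] has rank 2 and a_1, a_2 are not consecutive integers, in which case μ(σ, τ) = 1. -/

import Mathlib

open scoped Classical

/-- A finite permutation of arbitrary length: a length `n` together with a
permutation of `Fin n` (in one-line notation, the entry at position `i` is
its value at `i`). -/
abbrev QPerm : Type := Σ n : ℕ, Equiv.Perm (Fin n)

/-- `IsOcc a σ τ f` : the strictly monotone position map `f` selects an
occurrence of the pattern `σ` in `τ` (order-isomorphically), where for every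
gap index `j ≥ 1` (1-indexed) with `a j = false` the `j`-th and `(j+1)`-th
selected positions must be adjacent in `τ`. -/
def IsOcc (a : ℕ → Bool) {k n : ℕ} (σ : Equiv.Perm (Fin k)) (τ : Equiv.Perm (Fin n))
    (f : Fin k → Fin n) : Prop :=
  StrictMono f ∧ (∀ i j : Fin k, σ i < σ j ↔ τ (f i) < τ (f j)) ∧
    ∀ (i : ℕ) (h : i + 1 < k), a (i + 1) = false →
      (f ⟨i + 1, h⟩ : ℕ) = (f ⟨i, Nat.lt_of_succ_lt h⟩ : ℕ) + 1

/-- `σ` occurs in `τ` as an `a`-vincular pattern. -/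
def VOcc (a : ℕ → Bool) (σ τ : QPerm) : Prop :=
  ∃ f : Fin σ.1 → Fin τ.1, IsOcc a σ.2 τ.2 f

/-- Covering relation of the `a`-vincular pattern poset. -/
def VCov (a : ℕ → Bool) (σ τ : QPerm) : Prop :=
  σ.1 + 1 = τ.1 ∧ VOcc a σ τ

/-- The `a`-vincular pattern order: reflexive-transitive closure of covering. -/
def VLe (a : ℕ → Bool) (σ τ : QPerm) : Prop :=
  Relation.ReflTransGen (VCov a) σ τ

/-- Occurrence as an `A`-vincular pattern for a matrix `A` (rows and columns
1-indexed via `A i j`); a pattern of length `k` uses row `k - 1`. -/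
def MOcc (A : ℕ → ℕ → Bool) (σ τ : QPerm) : Prop :=
  VOcc (fun j => A (σ.1 - 1) j) σ τ

/-- Covering relation of the `A`-vincular pattern poset. -/
def MCov (A : ℕ → ℕ → Bool) (σ τ : QPerm) : Prop :=
  σ.1 + 1 = τ.1 ∧ MOcc A σ τ

/-- The `A`-vincular pattern order. -/
def MLe (A : ℕ → ℕ → Bool) (σ τ : QPerm) : Prop :=
  Relation.ReflTransGen (MCov A) σ τ

/-- The quasi-consecutive adjacency vector `a = (1,0,0,…)` (1-indexed). -/
def qa : ℕ → Bool := fun j => decide (j = 1)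

/-- Quasi-consecutive pattern occurrence. -/
def QOcc (σ τ : QPerm) : Prop := VOcc qa σ τ

/-- Covering in the quasi-consecutive pattern poset. -/
def QCov (σ τ : QPerm) : Prop := VCov qa σ τ

/-- The quasi-consecutive pattern poset order. -/
def QLe (σ τ : QPerm) : Prop := VLe qa σ τ

/-- All permutations of length at most `n`, as a finset. -/
def permsUpTo (n : ℕ) : Finset QPerm :=
  (Finset.range (n + 1)).sigma fun _ => Finset.univ

/-- Möbius function of the quasi-consecutive pattern poset, computed with
fuel (the fuel `τ.1` always suffices, since lengths strictly increase along
the order). -/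
noncomputable def qMuAux : ℕ → QPerm → QPerm → ℤ
  | 0, σ, τ => if σ = τ then 1 else 0
  | m + 1, σ, τ =>
      if σ = τ then 1
      else -∑ z ∈ (permsUpTo τ.1).filter fun z => QLe σ z ∧ QLe z τ ∧ z ≠ τ,
            qMuAux m σ z

/-- The Möbius function of the quasi-consecutive pattern poset. -/
noncomputable def qMu (σ τ : QPerm) : ℤ := qMuAux τ.1 σ τ

/-- The interval `[σ, τ]` in the quasi-consecutive pattern poset. -/
def QInterval (σ τ : QPerm) : Set QPerm := {ρ | QLe σ ρ ∧ QLe ρ τ}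

/-- The interval `[σ, τ]` is a chain. -/
def QChain (σ τ : QPerm) : Prop :=
  ∀ ρ₁ ρ₂ : QPerm, ρ₁ ∈ QInterval σ τ → ρ₂ ∈ QInterval σ τ → QLe ρ₁ ρ₂ ∨ QLe ρ₂ ρ₁

/-- The interval `[σ, τ]` is order-isomorphic to the product of a chain with
`p + 1` elements and a chain with `q + 1` elements (componentwise order). -/
def IsGridInterval (σ τ : QPerm) (p q : ℕ) : Prop :=
  ∃ e : QInterval σ τ ≃ Fin (p + 1) × Fin (q + 1),
    ∀ ρ₁ ρ₂ : QInterval σ τ, QLe ρ₁.1 ρ₂.1 ↔ e ρ₁ ≤ e ρ₂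

/-- The occurrence `f` involves position `i` (0-indexed) of the big permutation. -/
def Involves {k n : ℕ} (f : Fin k → Fin n) (i : ℕ) : Prop :=
  ∃ j : Fin k, (f j : ℕ) = i

/-- The occurrence `f` is consecutive: all selected positions are adjacent. -/
def ConsecOcc {k n : ℕ} (f : Fin k → Fin n) : Prop :=
  ∀ (i : ℕ) (h : i + 1 < k),
    (f ⟨i + 1, h⟩ : ℕ) = (f ⟨i, Nat.lt_of_succ_lt h⟩ : ℕ) + 1

/-- The first two entries of `τ` are not consecutive integers. -/
def NotConsecFirstTwo (τ : QPerm) : Prop :=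
  ∀ i j : Fin τ.1, (i : ℕ) = 0 → (j : ℕ) = 1 →
    (τ.2 i : ℕ) + 1 ≠ (τ.2 j : ℕ) ∧ (τ.2 j : ℕ) + 1 ≠ (τ.2 i : ℕ)

/-- `τ` is a monotone (increasing or decreasing) permutation. -/
def IsMonotonePerm (τ : QPerm) : Prop :=
  (∀ i j : Fin τ.1, i < j → τ.2 i < τ.2 j) ∨ (∀ i j : Fin τ.1, i < j → τ.2 j < τ.2 i)

namespace QQPatternAux

section Aux
open Equiv

lemma qa_false {i : ℕ} (hi : i ≠ 1) : qa i = false := by simp [qa, hi]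

lemma sm_le {k n : ℕ} {f : Fin k → Fin n} (hf : StrictMono f) :
    ∀ v (hv : v < k), v ≤ (f ⟨v, hv⟩ : ℕ) := by
  intro v
  induction v with
  | zero => intro hv; omega
  | succ m ih =>
    intro hv
    have h1 : f ⟨m, by omega⟩ < f ⟨m+1, hv⟩ := hf (by simp [Fin.lt_def])
    have h2 := ih (by omega)
    rw [Fin.lt_def] at h1
    have h3 : ((⟨m, by omega⟩ : Fin k) : ℕ) = m := rfl
    omega

lemma sm_le' {k n : ℕ} {f : Fin k → Fin n} (hf : StrictMono f) (i : Fin k) :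
    (i : ℕ) ≤ (f i : ℕ) := by
  have := sm_le hf i.1 i.2
  simpa using this

lemma perm_ext {m : ℕ} (p q : Equiv.Perm (Fin m))
    (h : ∀ i j, p i < p j ↔ q i < q j) : p = q := by
  have hg : StrictMono (fun i => q (p.symm i)) := by
    intro a b hab
    exact (h _ _).mp (by simpa using hab)
  have hh : StrictMono (fun i => p (q.symm i)) := by
    intro a b hab
    exact (h _ _).mpr (by simpa using hab)
  have key : ∀ i, q (p.symm i) = i := by
    intro i
    have h1 : (i : ℕ) ≤ (q (p.symm i) : ℕ) := sm_le' hg i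
    have h2 : ((q (p.symm i)) : ℕ) ≤ ((p (q.symm (q (p.symm i)))) : ℕ) := sm_le' hh _
    simp only [Equiv.symm_apply_apply, Equiv.apply_symm_apply] at h2
    exact (Fin.ext (by omega)).symm
  refine Equiv.ext fun j => ?_
  have h2 := key (p j)
  simp only [Equiv.symm_apply_apply] at h2
  exact h2.symm

lemma patt_exists {n m : ℕ} (tp : Equiv.Perm (Fin n)) (e : Fin m → Fin n)
    (he : Function.Injective e) :
    ∃ p : Equiv.Perm (Fin m), ∀ i j, p i < p j ↔ tp (e i) < tp (e j) := by
  have hinj : Function.Injective fun i => tp (e i) := fun a b hab => he (tp.injective hab)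
  have hcard : (Finset.univ.image fun i => tp (e i)).card = m := by
    rw [Finset.card_image_of_injective _ hinj]; simp
  set oi := (Finset.univ.image fun i => tp (e i)).orderIsoOfFin hcard with hoi
  have hmem : ∀ i, tp (e i) ∈ Finset.univ.image fun i => tp (e i) :=
    fun i => Finset.mem_image_of_mem _ (Finset.mem_univ i)
  set φ : Fin m → Fin m := fun i => oi.symm ⟨tp (e i), hmem i⟩ with hφ
  have hφinj : Function.Injective φ := by
    intro a b hab
    apply hinj
    have := congrArg oi hab
    simp only [hφ, OrderIso.apply_symm_apply] at this
    exact congrArg Subtype.val this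
  refine ⟨Equiv.ofBijective φ (Finite.injective_iff_bijective.mp hφinj), fun i j => ?_⟩
  show φ i < φ j ↔ _
  rw [hφ]
  simp only []
  rw [oi.symm.lt_iff_lt, Subtype.mk_lt_mk]

noncomputable def patt {n m : ℕ} (tp : Equiv.Perm (Fin n)) (e : Fin m → Fin n) :
    Equiv.Perm (Fin m) :=
  if h : ∃ p : Equiv.Perm (Fin m), ∀ i j, p i < p j ↔ tp (e i) < tp (e j) then h.choose
  else Equiv.refl _

lemma patt_iso {n m : ℕ} (tp : Equiv.Perm (Fin n)) {e : Fin m → Fin n}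
    (he : Function.Injective e) (i j : Fin m) :
    patt tp e i < patt tp e j ↔ tp (e i) < tp (e j) := by
  have h := patt_exists tp e he
  rw [patt, dif_pos h]
  exact h.choose_spec i j

lemma eq_patt {n m : ℕ} {tp : Equiv.Perm (Fin n)} {e : Fin m → Fin n}
    (he : Function.Injective e) {p : Equiv.Perm (Fin m)}
    (hp : ∀ i j, p i < p j ↔ tp (e i) < tp (e j)) : p = patt tp e :=
  perm_ext _ _ fun i j => (hp i j).trans (patt_iso tp he i j).symm

lemma patt_congr {n m : ℕ} {tp : Equiv.Perm (Fin n)} {e e' : Fin m → Fin n}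
    (he : Function.Injective e) (he' : Function.Injective e')
    (h : ∀ i j, tp (e i) < tp (e j) ↔ tp (e' i) < tp (e' j)) :
    patt tp e = patt tp e' :=
  eq_patt he' fun i j => (patt_iso tp he i j).trans (h i j)

lemma isOcc_id {k : ℕ} (sp : Equiv.Perm (Fin k)) : IsOcc qa sp sp id :=
  ⟨strictMono_id, fun _ _ => Iff.rfl, by intro i h _; simp⟩

lemma isOcc_comp {k m n : ℕ} {sp : Equiv.Perm (Fin k)} {rp : Equiv.Perm (Fin m)}
    {tp : Equiv.Perm (Fin n)} {g : Fin k → Fin m} {h : Fin m → Fin n}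
    (hg : IsOcc qa sp rp g) (hh : IsOcc qa rp tp h) : IsOcc qa sp tp (h ∘ g) := by
  refine ⟨hh.1.comp hg.1, fun i j => (hg.2.1 i j).trans (hh.2.1 _ _), ?_⟩
  intro i hik hqa
  have hi1 : 1 ≤ i := by
    by_contra hi
    have : i = 0 := by omega
    subst this
    simp [qa] at hqa
  have hadj := hg.2.2 i hik hqa
  set x := g ⟨i, Nat.lt_of_succ_lt hik⟩ with hx
  have hx1 : 1 ≤ (x : ℕ) := by
    have h' : i ≤ (x : ℕ) := by
      have := sm_le' hg.1 ⟨i, Nat.lt_of_succ_lt hik⟩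
      simpa [hx] using this
    omega
  have hxlt : (x : ℕ) + 1 < m := by
    have := (g ⟨i+1, hik⟩).isLt; omega
  have hgeq : g ⟨i+1, hik⟩ = ⟨(x : ℕ)+1, hxlt⟩ := Fin.ext hadj
  have hh2 := hh.2.2 (x : ℕ) hxlt (qa_false (by omega))
  have hfin : (⟨(x : ℕ), Nat.lt_of_succ_lt hxlt⟩ : Fin m) = x := Fin.ext rfl
  rw [hfin] at hh2
  show (h (g ⟨i+1, hik⟩) : ℕ) = (h (g ⟨i, Nat.lt_of_succ_lt hik⟩) : ℕ) + 1
  rw [hgeq, ← hx]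
  exact hh2

lemma qle_len {a b : QPerm} (h : QLe a b) : a.1 ≤ b.1 := by
  have h' : Relation.ReflTransGen QCov a b := h
  clear h
  induction h' with
  | refl => exact le_refl _
  | tail hab hbc ih => have := hbc.1; omega

lemma qle_lt_len {a b : QPerm} (h : QLe a b) (hne : a ≠ b) : a.1 < b.1 := by
  rcases (Relation.ReflTransGen.cases_tail (h : Relation.ReflTransGen QCov a b)) with
    heq | ⟨c, hac, hcb⟩
  · exact absurd heq.symm hne
  · have h1 := qle_len hac
    have h2 := hcb.1
    omega

lemma qle_eq_of_len {a b : QPerm} (h : QLe a b) (hlen : b.1 ≤ a.1) : a = b := by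
  by_contra hne
  have := qle_lt_len h hne
  omega

lemma qle_trans {a b c : QPerm} (h1 : QLe a b) (h2 : QLe b c) : QLe a c :=
  Relation.ReflTransGen.trans h1 h2

lemma qle_occ {a b : QPerm} (h : QLe a b) : ∃ f : Fin a.1 → Fin b.1, IsOcc qa a.2 b.2 f := by
  have h' : Relation.ReflTransGen QCov a b := h
  clear h
  induction h' with
  | refl => exact ⟨id, isOcc_id _⟩
  | tail hab hbc ih =>
    obtain ⟨g, hgo⟩ := ih
    obtain ⟨h', hho⟩ := hbc.2
    exact ⟨h' ∘ g, isOcc_comp hgo hho⟩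

/-- The values of an occurrence as a total ℕ-function (for omega-friendliness). -/
def fv {k n : ℕ} (f : Fin k → Fin n) : ℕ → ℕ := fun v => if hv : v < k then (f ⟨v, hv⟩ : ℕ) else 0

lemma fv_eq {k n : ℕ} (f : Fin k → Fin n) {v : ℕ} (hv : v < k) :
    ((f ⟨v, hv⟩ : Fin n) : ℕ) = fv f v := by simp [fv, dif_pos hv]

lemma fv_eq' {k n : ℕ} (f : Fin k → Fin n) (i : Fin k) : ((f i : Fin n) : ℕ) = fv f i := by
  rw [← fv_eq f i.2]

lemma fv_mono {k n : ℕ} {f : Fin k → Fin n} (hf : StrictMono f) {u v : ℕ}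
    (huv : u < v) (hv : v < k) : fv f u < fv f v := by
  rw [← fv_eq f hv, ← fv_eq f (by omega : u < k)]
  have := hf (show (⟨u, by omega⟩ : Fin k) < ⟨v, hv⟩ from Fin.mk_lt_mk.mpr huv)
  rwa [Fin.lt_def] at this

lemma fv_lt {k n : ℕ} (f : Fin k → Fin n) {v : ℕ} (hv : v < k) : fv f v < n := by
  rw [← fv_eq f hv]; exact (f ⟨v, hv⟩).isLt

lemma fv_adj {k n : ℕ} {sp : Equiv.Perm (Fin k)} {tp : Equiv.Perm (Fin n)}
    {f : Fin k → Fin n} (hf : IsOcc qa sp tp f) {m : ℕ} (hm : m + 1 < k) (hm1 : 1 ≤ m) :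
    fv f (m+1) = fv f m + 1 := by
  rw [← fv_eq f hm, ← fv_eq f (Nat.lt_of_succ_lt hm)]
  exact hf.2.2 m hm (qa_false (by omega))

lemma occ_struct {k n : ℕ} {sp : Equiv.Perm (Fin k)} {tp : Equiv.Perm (Fin n)}
    {f : Fin k → Fin n} (hf : IsOcc qa sp tp f) {x₀ : Fin k} (hx₀ : (f x₀ : ℕ) = n - 1) :
    (∀ v, v < k → 1 ≤ v → fv f v = n - k + v) ∧ (0 < k → fv f 0 ≤ n - k) := by
  have hn1 : 1 ≤ n := (f x₀).pos
  have hk1 : 1 ≤ k := x₀.pos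
  have hx₀' : fv f (x₀ : ℕ) = n - 1 := by rw [← fv_eq' f x₀]; exact hx₀
  have hxk := x₀.isLt
  by_cases hk : k = 1
  · subst hk
    have hx0 : (x₀ : ℕ) = 0 := by omega
    constructor
    · intro v hv h1; omega
    · intro h0; rw [← hx0]; omega
  · have h1k : 1 < k := by omega
    have hlin : ∀ v, v < k → 1 ≤ v → fv f v = fv f 1 + (v - 1) := by
      intro v
      induction v with
      | zero => intro hv h1; omega
      | succ m ih =>
        intro hv hm1
        by_cases hm : m = 0
        · subst hm; simp
        · have hadj := fv_adj hf hv (by omega)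
          have := ih (by omega) (by omega)
          omega
    have hx1 : 1 ≤ (x₀ : ℕ) := by
      by_contra hc
      have h0 : (x₀ : ℕ) = 0 := by omega
      have hlt := fv_mono hf.1 (show (x₀ : ℕ) < k - 1 by omega) (show k - 1 < k by omega)
      have hle2 := fv_lt f (show k - 1 < k by omega)
      omega
    have hklin := hlin (k-1) (by omega) (by omega)
    have hxlin := hlin (x₀ : ℕ) x₀.isLt hx1
    have hmle : fv f (x₀ : ℕ) ≤ fv f (k - 1) := by
      rcases Nat.eq_or_lt_of_le (show (x₀ : ℕ) ≤ k - 1 by omega) with he | hl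
      · rw [he]
      · exact le_of_lt (fv_mono hf.1 hl (by omega))
    have hbd := fv_lt f (show k - 1 < k by omega)
    have hf01 := fv_mono hf.1 (show 0 < 1 by omega) h1k
    have hf1 : fv f 1 = n - k + 1 := by omega
    constructor
    · intro v hv h1
      have := hlin v hv h1
      omega
    · intro h0
      have hlt := fv_mono hf.1 (show 0 < 1 by omega) h1k
      omega

end Aux

section WDefs
open Equiv

def Emb (n c j : ℕ) : Fin (n - j) → Fin n := fun i =>
  if (i : ℕ) = 0 then ⟨min c (n-1), by have := i.isLt; omega⟩
  else ⟨j + (i : ℕ), by have := i.isLt; omega⟩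

lemma Emb_val0 {n c j : ℕ} (hc : c ≤ n - 1) {i : Fin (n - j)} (hi : (i : ℕ) = 0) :
    (Emb n c j i : ℕ) = c := by
  simp [Emb, hi, min_eq_left hc]

lemma Emb_val1 {n c j : ℕ} {i : Fin (n - j)} (hi : (i : ℕ) ≠ 0) :
    (Emb n c j i : ℕ) = j + (i : ℕ) := by
  simp [Emb, hi]

lemma Emb_sm {n c j : ℕ} (hc : c ≤ j) : StrictMono (Emb n c j) := by
  intro a b hab
  rw [Fin.lt_def] at hab ⊢
  have hbn := b.isLt
  have hcn : c ≤ n - 1 := by omega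
  by_cases ha : (a : ℕ) = 0
  · have hb : (b : ℕ) ≠ 0 := by omega
    rw [Emb_val0 hcn ha, Emb_val1 hb]
    omega
  · have hb : (b : ℕ) ≠ 0 := by omega
    rw [Emb_val1 ha, Emb_val1 hb]
    omega

lemma Emb_adj {n c j : ℕ} (i : ℕ) (h : i + 1 < n - j) (hi : i ≠ 0) :
    (Emb n c j ⟨i+1, h⟩ : ℕ) = (Emb n c j ⟨i, Nat.lt_of_succ_lt h⟩ : ℕ) + 1 := by
  rw [Emb_val1 (by simp), Emb_val1 (by simp [hi])]
  simp
  omega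

noncomputable def W (n : ℕ) (tp : Equiv.Perm (Fin n)) (c j : ℕ) : QPerm := ⟨n - j, patt tp (Emb n c j)⟩

lemma W_iso {n : ℕ} (tp : Equiv.Perm (Fin n)) {c j : ℕ} (hc : c ≤ j)
    (x y : Fin (n - j)) :
    (W n tp c j).2 x < (W n tp c j).2 y ↔ tp (Emb n c j x) < tp (Emb n c j y) :=
  patt_iso tp (Emb_sm hc).injective x y

lemma W_occ {n : ℕ} (tp : Equiv.Perm (Fin n)) {c j : ℕ} (hc : c ≤ j) :
    IsOcc qa (W n tp c j).2 tp (Emb n c j) := by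
  refine ⟨Emb_sm hc, fun x y => W_iso tp hc x y, ?_⟩
  intro i hik hqa
  have hi0 : i ≠ 0 := by
    intro h; subst h; simp [qa] at hqa
  exact Emb_adj i hik hi0

lemma Emb_comp_keep {n c j : ℕ} (hc : c ≤ j) (x : Fin (n - (j+1))) :
    Emb n c j (Emb (n-j) 0 1 x) = Emb n c (j+1) x := by
  have hx := x.isLt
  have hjn : j + 2 ≤ n := by omega
  apply Fin.ext
  by_cases h : (x : ℕ) = 0
  · have h1 : (Emb (n-j) 0 1 x : ℕ) = 0 := Emb_val0 (by omega) h
    rw [Emb_val0 (by omega) h1, Emb_val0 (by omega) h]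
  · have h1 : (Emb (n-j) 0 1 x : ℕ) = 1 + (x : ℕ) := Emb_val1 h
    rw [Emb_val1 (by omega), Emb_val1 h, h1]
    omega

lemma Emb_comp_drop {n c j : ℕ} (hc : c ≤ j) (x : Fin (n - (j+1))) :
    Emb n c j (Emb (n-j) 1 1 x) = Emb n (j+1) (j+1) x := by
  have hx := x.isLt
  have hjn : j + 2 ≤ n := by omega
  apply Fin.ext
  by_cases h : (x : ℕ) = 0
  · have h1 : (Emb (n-j) 1 1 x : ℕ) = 1 := Emb_val0 (by omega) h
    rw [Emb_val1 (by omega), Emb_val0 (by omega) h, h1]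
  · have h1 : (Emb (n-j) 1 1 x : ℕ) = 1 + (x : ℕ) := Emb_val1 h
    rw [Emb_val1 (by omega), Emb_val1 h, h1]
    omega

lemma W_cov_keep {n : ℕ} (tp : Equiv.Perm (Fin n)) {c j : ℕ} (hc : c ≤ j) (hjn : j + 1 ≤ n) :
    QCov (W n tp c (j+1)) (W n tp c j) := by
  refine ⟨by show (n - (j+1)) + 1 = n - j; omega, ?_⟩
  refine ⟨Emb (n-j) 0 1, Emb_sm (by omega), ?_, ?_⟩
  · intro x y
    exact (W_iso tp (by omega : c ≤ j + 1) x y).trans ((Iff.of_eq (congrArg₂ (fun a b => tp a < tp b)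
      (Emb_comp_keep hc x) (Emb_comp_keep hc y))).symm.trans (W_iso tp hc _ _).symm)
  · intro i hik hqa
    have hi0 : i ≠ 0 := by intro h; subst h; simp [qa] at hqa
    exact Emb_adj (n := n - j) (c := 0) (j := 1) i hik hi0

lemma W_cov_drop {n : ℕ} (tp : Equiv.Perm (Fin n)) {c j : ℕ} (hc : c ≤ j) (hjn : j + 1 ≤ n) :
    QCov (W n tp (j+1) (j+1)) (W n tp c j) := by
  refine ⟨by show (n - (j+1)) + 1 = n - j; omega, ?_⟩
  refine ⟨Emb (n-j) 1 1, Emb_sm (by omega), ?_, ?_⟩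
  · intro x y
    exact (W_iso tp (le_refl (j+1)) x y).trans ((Iff.of_eq (congrArg₂ (fun a b => tp a < tp b)
      (Emb_comp_drop hc x) (Emb_comp_drop hc y))).symm.trans (W_iso tp hc _ _).symm)
  · intro i hik hqa
    have hi0 : i ≠ 0 := by intro h; subst h; simp [qa] at hqa
    exact Emb_adj (n := n - j) (c := 1) (j := 1) i hik hi0

lemma W_le_keep {n : ℕ} (tp : Equiv.Perm (Fin n)) {c j' : ℕ} (hc : c ≤ j') :
    ∀ j, j' ≤ j → j ≤ n → QLe (W n tp c j) (W n tp c j') := by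
  intro j
  induction j with
  | zero =>
    intro h1 h2
    have : j' = 0 := by omega
    subst this
    exact Relation.ReflTransGen.refl
  | succ j ih =>
    intro h1 h2
    rcases Nat.eq_or_lt_of_le h1 with he | hl
    · subst he
      exact Relation.ReflTransGen.refl
    · exact Relation.ReflTransGen.head
        (W_cov_keep tp (by omega) (by omega)) (ih (by omega) (by omega))

lemma W_le_suffix {n : ℕ} (tp : Equiv.Perm (Fin n)) {t' : ℕ} :
    ∀ t, t' ≤ t → t ≤ n → QLe (W n tp t t) (W n tp t' t') := by
  intro t
  induction t with
  | zero =>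
    intro h1 h2
    have : t' = 0 := by omega
    subst this
    exact Relation.ReflTransGen.refl
  | succ t ih =>
    intro h1 h2
    rcases Nat.eq_or_lt_of_le h1 with he | hl
    · subst he
      exact Relation.ReflTransGen.refl
    · exact Relation.ReflTransGen.head
        (W_cov_drop tp (le_refl t) (by omega)) (ih (by omega) (by omega))

lemma tau_eq_W00 {n : ℕ} (tp : Equiv.Perm (Fin n)) (hn : 1 ≤ n) :
    (⟨n, tp⟩ : QPerm) = W n tp 0 0 := by
  show _ = (⟨n - 0, patt tp (Emb n 0 0)⟩ : QPerm)
  have hE : ∀ i : Fin (n - 0), Emb n 0 0 i = i := by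
    intro i
    apply Fin.ext
    by_cases h : (i : ℕ) = 0
    · rw [Emb_val0 (by omega) h, h]
    · rw [Emb_val1 h]; omega
  have hp : patt tp (Emb n 0 0) = tp := by
    refine (eq_patt (Emb_sm (le_refl 0)).injective fun i j => ?_).symm
    rw [hE i, hE j]
  exact congrArg (fun p => (⟨n, p⟩ : QPerm)) hp.symm
end WDefs

section MainLemmas
open Equiv

variable {n k : ℕ} {tp : Equiv.Perm (Fin n)} {sp : Equiv.Perm (Fin k)}

lemma tp_lt_iff (tp : Equiv.Perm (Fin n)) {a b : Fin n} :
    tp a < tp b ↔ fv (⇑tp) (a : ℕ) < fv (⇑tp) (b : ℕ) := by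
  rw [Fin.lt_def, fv_eq' (⇑tp) a, fv_eq' (⇑tp) b]

lemma tv_inj (tp : Equiv.Perm (Fin n)) {u v : ℕ} (hu : u < n) (hv : v < n) (huv : u ≠ v) :
    fv (⇑tp) u ≠ fv (⇑tp) v := by
  rw [← fv_eq _ hu, ← fv_eq _ hv]
  intro hcon
  exact huv (congrArg Fin.val (tp.injective (Fin.ext hcon)))

lemma W_eq_iso {c c' j : ℕ} (hc : c ≤ j) (hc' : c' ≤ j) (hW : W n tp c j = W n tp c' j)
    (x y : Fin (n - j)) :
    tp (Emb n c j x) < tp (Emb n c j y) ↔ tp (Emb n c' j x) < tp (Emb n c' j y) := by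
  have h2 : patt tp (Emb n c j) = patt tp (Emb n c' j) := eq_of_heq (Sigma.ext_iff.mp hW).2
  rw [← patt_iso tp (Emb_sm hc).injective, ← patt_iso tp (Emb_sm hc').injective, h2]

/-- Lemma A: every proper element of `[σ, W c j]` is below one of the two
coatoms of `W c j` obtained by deleting its first or second entry. -/
lemma coatom (f : Fin k → Fin n) (hf : IsOcc qa sp tp f)
    (huniq : ∀ g : Fin k → Fin n, IsOcc qa sp tp g → g = f)
    (hlast : ∃ x : Fin k, (f x : ℕ) = n - 1)
    {c j : ℕ} (hc : c ≤ j) {z : QPerm}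
    (hσz : QLe ⟨k, sp⟩ z) (hz : QLe z (W n tp c j)) (hne : z ≠ W n tp c j) :
    QLe z (W n tp (j+1) (j+1)) ∨ QLe z (W n tp c (j+1)) := by
  obtain ⟨x₁, hx₁⟩ := hlast
  rcases Relation.ReflTransGen.cases_tail
      (hz : Relation.ReflTransGen QCov z (W n tp c j)) with heq | ⟨ρ, hzρ, hρcov⟩
  · exact absurd heq.symm hne
  · obtain ⟨m', rp⟩ := ρ
    have hlen : m' + 1 = n - j := hρcov.1
    have hσρ : QLe ⟨k, sp⟩ ⟨m', rp⟩ := qle_trans hσz hzρ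
    have hk1 : 1 ≤ k := x₁.pos
    have hm'k : k ≤ m' := qle_len hσρ
    have hjn : j + 2 ≤ n := by omega
    have hm' : m' = n - (j+1) := by omega
    subst hm'
    obtain ⟨(h : Fin (n - (j+1)) → Fin (n - j)), hh⟩ := hρcov.2
    have e1 : (W n tp c j).fst = n - j := rfl
    have e2 : ((⟨n - (j+1), rp⟩ : QPerm)).fst = n - (j+1) := rfl
    obtain ⟨g, hg⟩ := qle_occ hσρ
    have hHocc := W_occ tp hc
    have hcomp : IsOcc qa sp tp (Emb n c j ∘ (h ∘ g)) := isOcc_comp (isOcc_comp hg hh) hHocc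
    have hfe : Emb n c j ∘ (h ∘ g) = f := huniq _ hcomp
    have hval : (Emb n c j (h (g x₁)) : ℕ) = n - 1 := by
      rw [← hx₁, ← hfe]; rfl
    have hhg : (h (g x₁) : ℕ) = (n - j) - 1 := by
      by_cases h0 : (h (g x₁) : ℕ) = 0
      · rw [Emb_val0 (by omega) h0] at hval; omega
      · rw [Emb_val1 h0] at hval
        have := (h (g x₁)).isLt
        omega
    have hstr := occ_struct (n := n - j) hh (x₀ := g x₁) hhg
    simp only [e1, e2] at hstr
    have htail := hstr.1
    have hh0 := hstr.2 (by omega)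
    have htail' : ∀ v, v < n - (j+1) → 1 ≤ v → fv h v = 1 + v := by
      intro v hv h1
      have := htail v hv h1
      omega
    rw [(by omega : (n - j) - (n - (j+1)) = 1)] at hh0
    by_cases hcase : fv h 0 = 0
    · -- keep c : ρ = W n tp c (j+1)
      right
      have hfun : ∀ x : Fin (n - (j+1)), Emb n c j (h x) = Emb n c (j+1) x := by
        intro x
        apply Fin.ext
        by_cases hx : (x : ℕ) = 0
        · have hval0 : (h x : ℕ) = 0 := by rw [fv_eq' h x, hx, hcase]
          rw [Emb_val0 (by omega) hval0, Emb_val0 (by omega) hx]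
        · have hxlt := x.isLt
          have hval1 : (h x : ℕ) = 1 + (x : ℕ) := by
            rw [fv_eq' h x]; exact htail' _ hxlt (by omega)
          rw [Emb_val1 (by omega), Emb_val1 hx, hval1]
          omega
      have hrp : rp = patt tp (Emb n c (j+1)) := by
        apply eq_patt (Emb_sm (by omega : c ≤ j + 1)).injective
        intro x y
        rw [hh.2.1 x y, W_iso tp hc, hfun x, hfun y]
      have : (⟨n - (j+1), rp⟩ : QPerm) = W n tp c (j+1) :=
        congrArg (fun p => (⟨n - (j+1), p⟩ : QPerm)) hrp
      rwa [this] at hzρ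
    · -- drop : ρ = W n tp (j+1) (j+1)
      left
      have hcase1 : fv h 0 = 1 := by omega
      have hfun : ∀ x : Fin (n - (j+1)), Emb n c j (h x) = Emb n (j+1) (j+1) x := by
        intro x
        apply Fin.ext
        by_cases hx : (x : ℕ) = 0
        · have hval0 : (h x : ℕ) = 1 := by rw [fv_eq' h x, hx, hcase1]
          rw [Emb_val1 (by omega), Emb_val0 (by omega) hx, hval0]
        · have hxlt := x.isLt
          have hval1 : (h x : ℕ) = 1 + (x : ℕ) := by
            rw [fv_eq' h x]; exact htail' _ hxlt (by omega)
          rw [Emb_val1 (by omega), Emb_val1 hx, hval1]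
          omega
      have hrp : rp = patt tp (Emb n (j+1) (j+1)) := by
        apply eq_patt (Emb_sm (le_refl (j+1))).injective
        intro x y
        rw [hh.2.1 x y, W_iso tp hc, hfun x, hfun y]
      have : (⟨n - (j+1), rp⟩ : QPerm) = W n tp (j+1) (j+1) :=
        congrArg (fun p => (⟨n - (j+1), p⟩ : QPerm)) hrp
      rwa [this] at hzρ

/-- A value strictly between the first two entries. -/
def Btw (n : ℕ) (tp : Equiv.Perm (Fin n)) (s : ℕ) : Prop :=
  (fv (⇑tp) 0 < fv (⇑tp) s ∧ fv (⇑tp) s < fv (⇑tp) 1) ∨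
  (fv (⇑tp) 1 < fv (⇑tp) s ∧ fv (⇑tp) s < fv (⇑tp) 0)

lemma sep_exists (hn : 3 ≤ n) (hne : W n tp 0 1 ≠ W n tp 1 1) :
    ∃ s, 2 ≤ s ∧ s < n ∧ Btw n tp s := by
  by_contra hcon
  push_neg at hcon
  apply hne
  apply congrArg (fun p => (⟨n - 1, p⟩ : QPerm))
  apply patt_congr (Emb_sm (by omega : 0 ≤ 1)).injective (Emb_sm (le_refl 1)).injective
  intro x y
  rw [tp_lt_iff, tp_lt_iff]
  have hx := x.isLt
  have hy := y.isLt
  by_cases h0 : (x : ℕ) = 0 <;> by_cases h1 : (y : ℕ) = 0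
  · have v1 : (Emb n 0 1 x : ℕ) = 0 := Emb_val0 (by omega) h0
    have v2 : (Emb n 0 1 y : ℕ) = 0 := Emb_val0 (by omega) h1
    have v3 : (Emb n 1 1 x : ℕ) = 1 := Emb_val0 (by omega) h0
    have v4 : (Emb n 1 1 y : ℕ) = 1 := Emb_val0 (by omega) h1
    rw [v1, v2, v3, v4]
    omega
  · have v1 : (Emb n 0 1 x : ℕ) = 0 := Emb_val0 (by omega) h0
    have v2 : (Emb n 0 1 y : ℕ) = 1 + (y : ℕ) := Emb_val1 h1
    have v3 : (Emb n 1 1 x : ℕ) = 1 := Emb_val0 (by omega) h0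
    have v4 : (Emb n 1 1 y : ℕ) = 1 + (y : ℕ) := Emb_val1 h1
    rw [v1, v2, v3, v4]
    have hs := hcon (1 + (y : ℕ)) (by omega) (by omega)
    unfold Btw at hs
    have i1 := tv_inj tp (by omega : (0:ℕ) < n) (by omega : 1 + (y:ℕ) < n) (by omega)
    have i2 := tv_inj tp (by omega : (1:ℕ) < n) (by omega : 1 + (y:ℕ) < n) (by omega)
    omega
  · have v1 : (Emb n 0 1 x : ℕ) = 1 + (x : ℕ) := Emb_val1 h0
    have v2 : (Emb n 0 1 y : ℕ) = 0 := Emb_val0 (by omega) h1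
    have v3 : (Emb n 1 1 x : ℕ) = 1 + (x : ℕ) := Emb_val1 h0
    have v4 : (Emb n 1 1 y : ℕ) = 1 := Emb_val0 (by omega) h1
    rw [v1, v2, v3, v4]
    have hs := hcon (1 + (x : ℕ)) (by omega) (by omega)
    unfold Btw at hs
    have i1 := tv_inj tp (by omega : (0:ℕ) < n) (by omega : 1 + (x:ℕ) < n) (by omega)
    have i2 := tv_inj tp (by omega : (1:ℕ) < n) (by omega : 1 + (x:ℕ) < n) (by omega)
    omega
  · have v1 : (Emb n 0 1 x : ℕ) = 1 + (x : ℕ) := Emb_val1 h0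
    have v2 : (Emb n 0 1 y : ℕ) = 1 + (y : ℕ) := Emb_val1 h1
    have v3 : (Emb n 1 1 x : ℕ) = 1 + (x : ℕ) := Emb_val1 h0
    have v4 : (Emb n 1 1 y : ℕ) = 1 + (y : ℕ) := Emb_val1 h1
    rw [v1, v2, v3, v4]

lemma no_tail_sep {j : ℕ} (hj1 : 1 ≤ j) (hjn : j < n) (heq : W n tp 0 j = W n tp 1 j) :
    ∀ s, j + 1 ≤ s → s < n → ¬ Btw n tp s := by
  intro s hs1 hs2 hbet
  have hiso := W_eq_iso (by omega : 0 ≤ j) hj1 heq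
    ⟨0, by omega⟩ ⟨s - j, by omega⟩
  rw [tp_lt_iff, tp_lt_iff] at hiso
  have hx0 : ((⟨0, by omega⟩ : Fin (n - j)) : ℕ) = 0 := rfl
  have hxs : ((⟨s - j, by omega⟩ : Fin (n - j)) : ℕ) = s - j := rfl
  have v1 : (Emb n 0 j (⟨0, by omega⟩ : Fin (n - j)) : ℕ) = 0 := Emb_val0 (by omega) hx0
  have v2 : (Emb n 1 j (⟨0, by omega⟩ : Fin (n - j)) : ℕ) = 1 := Emb_val0 (by omega) hx0
  have v3 : (Emb n 0 j (⟨s - j, by omega⟩ : Fin (n - j)) : ℕ) = s := by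
    rw [Emb_val1 (by rw [hxs]; omega), hxs]; omega
  have v4 : (Emb n 1 j (⟨s - j, by omega⟩ : Fin (n - j)) : ℕ) = s := by
    rw [Emb_val1 (by rw [hxs]; omega), hxs]; omega
  rw [v1, v2, v3, v4] at hiso
  unfold Btw at hbet
  have i1 := tv_inj tp (by omega : (0:ℕ) < n) hs2 (by omega)
  have i2 := tv_inj tp (by omega : (1:ℕ) < n) hs2 (by omega)
  omega

lemma claimC (hn : 3 ≤ n) {j : ℕ} (hj2 : 2 ≤ j) (hjn : j < n)
    (hρ : W n tp 0 1 ≠ W n tp 1 1) (heq : W n tp 0 j = W n tp 1 j) :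
    QLe (W n tp 0 j) (W n tp 2 2) := by
  obtain ⟨s, hs2, hsn, hbet⟩ := sep_exists hn hρ
  have htail := no_tail_sep (by omega : 1 ≤ j) hjn heq
  have hsj : s ≤ j := by
    by_contra hcon
    exact htail s (by omega) hsn hbet
  have hWs : W n tp 0 j = W n tp s j := by
    apply congrArg (fun p => (⟨n - j, p⟩ : QPerm))
    apply patt_congr (Emb_sm (by omega : 0 ≤ j)).injective (Emb_sm hsj).injective
    intro x y
    rw [tp_lt_iff, tp_lt_iff]
    have hx := x.isLt
    have hy := y.isLt
    by_cases h0 : (x : ℕ) = 0 <;> by_cases h1 : (y : ℕ) = 0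
    · have v1 : (Emb n 0 j x : ℕ) = 0 := Emb_val0 (by omega) h0
      have v2 : (Emb n 0 j y : ℕ) = 0 := Emb_val0 (by omega) h1
      have v3 : (Emb n s j x : ℕ) = s := Emb_val0 (by omega) h0
      have v4 : (Emb n s j y : ℕ) = s := Emb_val0 (by omega) h1
      rw [v1, v2, v3, v4]
      omega
    · have v1 : (Emb n 0 j x : ℕ) = 0 := Emb_val0 (by omega) h0
      have v2 : (Emb n 0 j y : ℕ) = j + (y : ℕ) := Emb_val1 h1
      have v3 : (Emb n s j x : ℕ) = s := Emb_val0 (by omega) h0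
      have v4 : (Emb n s j y : ℕ) = j + (y : ℕ) := Emb_val1 h1
      rw [v1, v2, v3, v4]
      have hts := htail (j + (y : ℕ)) (by omega) (by omega)
      unfold Btw at hts hbet
      have i1 := tv_inj tp (by omega : (0:ℕ) < n) (by omega : j + (y:ℕ) < n) (by omega)
      have i2 := tv_inj tp (by omega : (1:ℕ) < n) (by omega : j + (y:ℕ) < n) (by omega)
      have i3 := tv_inj tp hsn (by omega : j + (y:ℕ) < n) (by omega)
      omega
    · have v1 : (Emb n 0 j x : ℕ) = j + (x : ℕ) := Emb_val1 h0
      have v2 : (Emb n 0 j y : ℕ) = 0 := Emb_val0 (by omega) h1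
      have v3 : (Emb n s j x : ℕ) = j + (x : ℕ) := Emb_val1 h0
      have v4 : (Emb n s j y : ℕ) = s := Emb_val0 (by omega) h1
      rw [v1, v2, v3, v4]
      have hts := htail (j + (x : ℕ)) (by omega) (by omega)
      unfold Btw at hts hbet
      have i1 := tv_inj tp (by omega : (0:ℕ) < n) (by omega : j + (x:ℕ) < n) (by omega)
      have i2 := tv_inj tp (by omega : (1:ℕ) < n) (by omega : j + (x:ℕ) < n) (by omega)
      have i3 := tv_inj tp hsn (by omega : j + (x:ℕ) < n) (by omega)
      omega
    · have v1 : (Emb n 0 j x : ℕ) = j + (x : ℕ) := Emb_val1 h0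
      have v2 : (Emb n 0 j y : ℕ) = j + (y : ℕ) := Emb_val1 h1
      have v3 : (Emb n s j x : ℕ) = j + (x : ℕ) := Emb_val1 h0
      have v4 : (Emb n s j y : ℕ) = j + (y : ℕ) := Emb_val1 h1
      rw [v1, v2, v3, v4]
  rw [hWs]
  exact qle_trans (W_le_keep tp (le_refl s) j hsj (by omega))
    (W_le_suffix tp (t' := 2) s hs2 (by omega))

/-- Lemma B: the common lower bounds of the two coatoms that are above `σ`
are exactly the elements below `π = W 2 2`. -/
lemma lemB (f : Fin k → Fin n) (hf : IsOcc qa sp tp f)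
    (huniq : ∀ g : Fin k → Fin n, IsOcc qa sp tp g → g = f)
    (hlast : ∃ x : Fin k, (f x : ℕ) = n - 1)
    (hρ : W n tp 0 1 ≠ W n tp 1 1) (hn3 : 3 ≤ n) (hk1 : 1 ≤ k) :
    ∀ t j z, 1 ≤ j → n - j ≤ t → QLe ⟨k, sp⟩ z → QLe z (W n tp 0 j) →
      QLe z (W n tp 1 j) → QLe z (W n tp 2 2) := by
  intro t
  induction t with
  | zero =>
    intro j z h1 h2 hσz hz0 hz1
    have ha : k ≤ z.1 := qle_len hσz
    have hb : z.1 ≤ n - j := qle_len hz0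
    exfalso
    omega
  | succ t ih =>
    intro j z hj1 hcnt hσz hz0 hz1
    have hzlen : z.1 ≤ n - j := qle_len hz0
    have hklen : k ≤ z.1 := qle_len hσz

    by_cases heq : W n tp 0 j = W n tp 1 j
    · by_cases hj : j = 1
      · subst hj; exact absurd heq hρ
      · exact qle_trans hz0 (claimC hn3 (by omega) (by omega) hρ heq)
    · have hne0 : z ≠ W n tp 0 j := by
        intro hzeq
        rw [hzeq] at hz1
        exact heq (qle_eq_of_len hz1 (le_refl _))
      have hne1 : z ≠ W n tp 1 j := by
        intro hzeq
        rw [hzeq] at hz0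
        apply heq
        exact (qle_eq_of_len hz0 (le_refl _)).symm
      rcases coatom f hf huniq hlast (by omega : 0 ≤ j) hσz hz0 hne0 with hA | hB0
      · have hlen2 : z.1 ≤ n - (j+1) := qle_len hA
        exact qle_trans hA (W_le_suffix tp (t' := 2) (j+1) (by omega) (by omega))
      · rcases coatom f hf huniq hlast hj1 hσz hz1 hne1 with hA | hB1
        · have hlen2 : z.1 ≤ n - (j+1) := qle_len hA
          exact qle_trans hA (W_le_suffix tp (t' := 2) (j+1) (by omega) (by omega))
        · exact ih (j+1) z (by omega) (by omega) hσz hB0 hB1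

end MainLemmas

section Mobius

lemma qMuAux_self (m : ℕ) (σ : QPerm) : qMuAux m σ σ = 1 := by
  cases m <;> simp [qMuAux]

lemma mem_permsUpTo {N : ℕ} {z : QPerm} : z ∈ permsUpTo N ↔ z.1 ≤ N := by
  obtain ⟨z1, z2⟩ := z
  simp only [permsUpTo, Finset.mem_sigma, Finset.mem_range, Finset.mem_univ, and_true]
  omega

lemma qle_anti {a b : QPerm} (h1 : QLe a b) (h2 : QLe b a) : a = b :=
  qle_eq_of_len h1 (qle_len h2)

lemma qMuAux_stab (σ : QPerm) :
    ∀ m (υ : QPerm), υ.1 - σ.1 ≤ m → qMuAux (m+1) σ υ = qMuAux m σ υ := by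
  intro m
  induction m with
  | zero =>
    intro υ h
    by_cases he : σ = υ
    · subst he; rw [qMuAux_self, qMuAux_self]
    · simp only [qMuAux, if_neg he]
      have hS : (permsUpTo υ.1).filter (fun z => QLe σ z ∧ QLe z υ ∧ z ≠ υ) = ∅ := by
        apply Finset.eq_empty_of_forall_notMem
        intro z hz
        rw [Finset.mem_filter] at hz
        obtain ⟨hmem, h1, h2, h3⟩ := hz
        have l1 := qle_len h1
        have l2 := qle_lt_len h2 h3
        omega
      rw [hS]
      simp
  | succ m ih =>
    intro υ h
    by_cases he : σ = υ
    · subst he; rw [qMuAux_self, qMuAux_self]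
    · show qMuAux (m+1+1) σ υ = qMuAux (m+1) σ υ
      simp only [qMuAux, if_neg he]
      congr 1
      apply Finset.sum_congr rfl
      intro z hz
      rw [Finset.mem_filter] at hz
      obtain ⟨hmem, h1, h2, h3⟩ := hz
      have l1 := qle_lt_len h2 h3
      exact ih z (by omega)

lemma qMuAux_add (σ υ : QPerm) :
    ∀ d m, υ.1 - σ.1 ≤ m → qMuAux (m + d) σ υ = qMuAux m σ υ := by
  intro d
  induction d with
  | zero => intro m h; rfl
  | succ d ih =>
    intro m h
    show qMuAux ((m + d) + 1) σ υ = qMuAux m σ υ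
    rw [qMuAux_stab σ (m+d) υ (by omega), ih m h]

lemma qMu_fuel (σ υ : QPerm) (m : ℕ) (h : υ.1 - σ.1 ≤ m) : qMuAux m σ υ = qMu σ υ := by
  have h1 : qMuAux m σ υ = qMuAux (υ.1 - σ.1) σ υ := by
    have := qMuAux_add σ υ (m - (υ.1 - σ.1)) (υ.1 - σ.1) (le_refl _)
    rwa [show (υ.1 - σ.1) + (m - (υ.1 - σ.1)) = m by omega] at this
  have h2 : qMuAux υ.1 σ υ = qMuAux (υ.1 - σ.1) σ υ := by
    have := qMuAux_add σ υ (υ.1 - (υ.1 - σ.1)) (υ.1 - σ.1) (le_refl _)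
    rwa [show (υ.1 - σ.1) + (υ.1 - (υ.1 - σ.1)) = υ.1 by omega] at this
  rw [h1, qMu, h2]

lemma qMu_rec (σ υ : QPerm) (hne : υ ≠ σ) :
    qMu σ υ = -∑ z ∈ (permsUpTo υ.1).filter (fun z => QLe σ z ∧ QLe z υ ∧ z ≠ υ),
      qMu σ z := by
  have hne' : ¬ σ = υ := fun h => hne h.symm
  rw [qMu]
  rcases Nat.eq_zero_or_pos υ.1 with h0 | hpos
  · have hS : (permsUpTo υ.1).filter (fun z => QLe σ z ∧ QLe z υ ∧ z ≠ υ) = ∅ := by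
      apply Finset.eq_empty_of_forall_notMem
      intro z hz
      rw [Finset.mem_filter] at hz
      obtain ⟨hmem, h1, h2, h3⟩ := hz
      have l2 := qle_lt_len h2 h3
      omega
    rw [hS, h0, Finset.sum_empty]
    simp only [qMuAux, if_neg hne', neg_zero]
  · obtain ⟨m, hm⟩ : ∃ m, υ.1 = m + 1 := ⟨υ.1 - 1, by omega⟩
    have hstep : qMuAux υ.1 σ υ = qMuAux (m+1) σ υ := by rw [hm]
    rw [hstep]
    rw [show qMuAux (m+1) σ υ
        = -∑ z ∈ (permsUpTo υ.1).filter (fun z => QLe σ z ∧ QLe z υ ∧ z ≠ υ),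
            qMuAux m σ z from by simp only [qMuAux, if_neg hne']]
    congr 1
    apply Finset.sum_congr rfl
    intro z hz
    rw [Finset.mem_filter] at hz
    obtain ⟨hmem, h1, h2, h3⟩ := hz
    have l2 := qle_lt_len h2 h3
    exact qMu_fuel σ z m (by omega)

lemma sum_qMu_interval (σ υ : QPerm) (N : ℕ) (hN : υ.1 ≤ N) :
    ∑ z ∈ (permsUpTo N).filter (fun z => QLe σ z ∧ QLe z υ), qMu σ z
      = if υ = σ then 1 else 0 := by
  by_cases he : υ = σ
  · rw [if_pos he]
    subst he
    have hsingle : (permsUpTo N).filter (fun z => QLe υ z ∧ QLe z υ) = {υ} := by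
      ext z
      rw [Finset.mem_filter, Finset.mem_singleton, mem_permsUpTo]
      constructor
      · rintro ⟨hm, h1, h2⟩
        exact (qle_anti h1 h2).symm
      · rintro rfl
        exact ⟨hN, Relation.ReflTransGen.refl, Relation.ReflTransGen.refl⟩
    rw [hsingle, Finset.sum_singleton, qMu, qMuAux_self]
  · rw [if_neg he]
    by_cases hle : QLe σ υ
    · have hsplit : (permsUpTo N).filter (fun z => QLe σ z ∧ QLe z υ)
          = insert υ ((permsUpTo υ.1).filter (fun z => QLe σ z ∧ QLe z υ ∧ z ≠ υ)) := by
        ext z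
        rw [Finset.mem_insert, Finset.mem_filter, Finset.mem_filter,
          mem_permsUpTo, mem_permsUpTo]
        constructor
        · rintro ⟨hm, h1, h2⟩
          by_cases hz : z = υ
          · exact Or.inl hz
          · exact Or.inr ⟨qle_len h2, h1, h2, hz⟩
        · rintro (rfl | ⟨hm, h1, h2, h3⟩)
          · exact ⟨hN, hle, Relation.ReflTransGen.refl⟩
          · exact ⟨le_trans (qle_len h2) hN, h1, h2⟩
      rw [hsplit, Finset.sum_insert (by
        rw [Finset.mem_filter]
        rintro ⟨hm, h1, h2, h3⟩
        exact h3 rfl)]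
      rw [qMu_rec σ υ he]
      exact neg_add_cancel _
    · have hempty : (permsUpTo N).filter (fun z => QLe σ z ∧ QLe z υ) = ∅ := by
        apply Finset.eq_empty_of_forall_notMem
        intro z hz
        rw [Finset.mem_filter] at hz
        exact hle (qle_trans hz.2.1 hz.2.2)
      rw [hempty, Finset.sum_empty]

end Mobius

section NCFT
open Equiv
variable {n : ℕ} {tp : Equiv.Perm (Fin n)}

lemma ncft_iff (hn3 : 3 ≤ n) :
    NotConsecFirstTwo ⟨n, tp⟩ ↔ W n tp 0 1 ≠ W n tp 1 1 := by
  constructor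
  · intro hN heq
    have h0n : (0:ℕ) < n := by omega
    have h1n : (1:ℕ) < n := by omega
    have hi : ((tp ⟨0, h0n⟩ : Fin n) : ℕ) + 1 ≠ ((tp ⟨1, h1n⟩ : Fin n) : ℕ) ∧
        ((tp ⟨1, h1n⟩ : Fin n) : ℕ) + 1 ≠ ((tp ⟨0, h0n⟩ : Fin n) : ℕ) :=
      hN ⟨0, h0n⟩ ⟨1, h1n⟩ rfl rfl
    rw [fv_eq (⇑tp) h0n, fv_eq (⇑tp) h1n] at hi
    have hab := tv_inj tp h0n h1n (by omega)
    have ha := fv_lt (⇑tp) h0n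
    have hb := fv_lt (⇑tp) h1n
    have hv : min (fv (⇑tp) 0) (fv (⇑tp) 1) + 1 < n := by omega
    obtain ⟨s, hsval⟩ : ∃ s : Fin n,
        fv (⇑tp) (s : ℕ) = min (fv (⇑tp) 0) (fv (⇑tp) 1) + 1 :=
      ⟨tp.symm ⟨_, hv⟩, by rw [← fv_eq' (⇑tp) _, Equiv.apply_symm_apply]⟩
    have hs0 : (s : ℕ) ≠ 0 := by intro hcon; rw [hcon] at hsval; omega
    have hs1 : (s : ℕ) ≠ 1 := by intro hcon; rw [hcon] at hsval; omega
    apply no_tail_sep (j := 1) (by omega) (by omega) heq (s : ℕ) (by omega) s.isLt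
    unfold Btw
    omega
  · intro hne
    obtain ⟨s, hs2, hsn, hbet⟩ := sep_exists hn3 hne
    intro i j hi hj
    show ((tp i : Fin n) : ℕ) + 1 ≠ ((tp j : Fin n) : ℕ) ∧
      ((tp j : Fin n) : ℕ) + 1 ≠ ((tp i : Fin n) : ℕ)
    have ei : ((tp i : Fin n) : ℕ) = fv (⇑tp) 0 := by rw [fv_eq' (⇑tp) i, hi]
    have ej : ((tp j : Fin n) : ℕ) = fv (⇑tp) 1 := by rw [fv_eq' (⇑tp) j, hj]
    unfold Btw at hbet
    rw [ei, ej]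
    omega

end NCFT

end QQPatternAux

open QQPatternAux in
/-- If `σ` occurs precisely once in `τ = a₁a₂⋯aₙ` and the occurrence
involves `aₙ` but neither `a₁` nor `a₂`, then `μ(σ,τ) = 0` unless `[σ,τ]`
has rank `2` and `a₁, a₂` are not consecutive integers, in which case
`μ(σ,τ) = 1`. -/
theorem unique_occurrence_last_entry (σ τ : QPerm) (hle : QLe σ τ)
    (f : Fin σ.1 → Fin τ.1) (hf : IsOcc qa σ.2 τ.2 f)
    (huniq : ∀ g : Fin σ.1 → Fin τ.1, IsOcc qa σ.2 τ.2 g → g = f)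
    (hn : Involves f (τ.1 - 1)) (h0 : ¬ Involves f 0) (h1 : ¬ Involves f 1) :
    (τ.1 - σ.1 = 2 ∧ NotConsecFirstTwo τ → qMu σ τ = 1) ∧
      (¬ (τ.1 - σ.1 = 2 ∧ NotConsecFirstTwo τ) → qMu σ τ = 0) := by
  obtain ⟨k, sp⟩ := σ
  obtain ⟨n, tp⟩ := τ
  obtain ⟨x₁, hx₁⟩ := hn
  have hfc : IsOcc (k := k) (n := n) qa sp tp f := hf
  have huniqc : ∀ g : Fin k → Fin n, IsOcc qa sp tp g → g = f := huniq
  have hx₁' : ((f x₁ : Fin n) : ℕ) = n - 1 := hx₁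
  have hk1 : 1 ≤ k := x₁.pos
  have hn1 : 1 ≤ n := (f x₁).pos
  have hstr := occ_struct hfc (x₀ := x₁) hx₁'
  have htail := hstr.1
  have hf0le := hstr.2 hk1
  have hne0 : fv f 0 ≠ 0 := fun hcon => h0 ⟨⟨0, hk1⟩, (fv_eq f hk1).trans hcon⟩
  have hne1 : fv f 0 ≠ 1 := fun hcon => h1 ⟨⟨0, hk1⟩, (fv_eq f hk1).trans hcon⟩
  have hf02 : 2 ≤ fv f 0 := by omega
  have hrank : k + 2 ≤ n := by omega
  have hn3 : 3 ≤ n := by omega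
  have htau : (⟨n, tp⟩ : QPerm) = W n tp 0 0 := tau_eq_W00 tp (by omega)
  have hlast : ∃ x : Fin k, (f x : ℕ) = n - 1 := ⟨x₁, hx₁'⟩
  have hτσ : (⟨n, tp⟩ : QPerm) ≠ (⟨k, sp⟩ : QPerm) := by
    intro hcon
    have hcc : n = k := congrArg Sigma.fst hcon
    omega
  have hW01τ : QLe (W n tp 0 1) ⟨n, tp⟩ := by
    rw [htau]; exact W_le_keep tp (le_refl 0) 1 (by omega) (by omega)
  have hW11τ : QLe (W n tp 1 1) ⟨n, tp⟩ := by
    rw [htau]; exact W_le_suffix tp (t' := 0) 1 (by omega) (by omega)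
  have hW22_01 : QLe (W n tp 2 2) (W n tp 0 1) :=
    Relation.ReflTransGen.single (W_cov_drop tp (by omega : 0 ≤ 1) (by omega))
  have hW22_11 : QLe (W n tp 2 2) (W n tp 1 1) :=
    Relation.ReflTransGen.single (W_cov_drop tp (le_refl 1) (by omega))
  have hμrec : qMu (⟨k, sp⟩ : QPerm) (⟨n, tp⟩ : QPerm)
      = -∑ z ∈ (permsUpTo n).filter
          (fun z => QLe ⟨k, sp⟩ z ∧ QLe z ⟨n, tp⟩ ∧ z ≠ (⟨n, tp⟩ : QPerm)),
          qMu ⟨k, sp⟩ z :=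
    qMu_rec ⟨k, sp⟩ ⟨n, tp⟩ hτσ
  have hsplit : (permsUpTo n).filter
        (fun z => QLe ⟨k, sp⟩ z ∧ QLe z ⟨n, tp⟩ ∧ z ≠ (⟨n, tp⟩ : QPerm))
      = ((permsUpTo n).filter (fun z => QLe ⟨k, sp⟩ z ∧ QLe z (W n tp 0 1)))
        ∪ ((permsUpTo n).filter (fun z => QLe ⟨k, sp⟩ z ∧ QLe z (W n tp 1 1))) := by
    ext z
    rw [Finset.mem_union, Finset.mem_filter, Finset.mem_filter, Finset.mem_filter]
    constructor
    · rintro ⟨hm, ha, hb, hc⟩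
      have hb' : QLe z (W n tp 0 0) := by rw [← htau]; exact hb
      have hc' : z ≠ W n tp 0 0 := by rw [← htau]; exact hc
      rcases coatom f hfc huniqc hlast (le_refl 0) ha hb' hc' with hA | hB
      · exact Or.inr ⟨hm, ha, hA⟩
      · exact Or.inl ⟨hm, ha, hB⟩
    · rintro (⟨hm, ha, hb⟩ | ⟨hm, ha, hb⟩)
      · refine ⟨hm, ha, qle_trans hb hW01τ, ?_⟩
        intro hcon
        rw [hcon] at hb
        have hlen : n ≤ n - 1 := qle_len hb
        omega
      · refine ⟨hm, ha, qle_trans hb hW11τ, ?_⟩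
        intro hcon
        rw [hcon] at hb
        have hlen : n ≤ n - 1 := qle_len hb
        omega
  have hsum0 : ∑ z ∈ (permsUpTo n).filter
      (fun z => QLe ⟨k, sp⟩ z ∧ QLe z (W n tp 0 1)), qMu ⟨k, sp⟩ z = 0 := by
    rw [sum_qMu_interval ⟨k, sp⟩ (W n tp 0 1) n (by show n - 1 ≤ n; omega)]
    rw [if_neg (by
      intro hcon
      have hcc : n - 1 = k := congrArg Sigma.fst hcon
      omega)]
  have hsum1 : ∑ z ∈ (permsUpTo n).filter
      (fun z => QLe ⟨k, sp⟩ z ∧ QLe z (W n tp 1 1)), qMu ⟨k, sp⟩ z = 0 := by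
    rw [sum_qMu_interval ⟨k, sp⟩ (W n tp 1 1) n (by show n - 1 ≤ n; omega)]
    rw [if_neg (by
      intro hcon
      have hcc : n - 1 = k := congrArg Sigma.fst hcon
      omega)]
  by_cases hcons : W n tp 0 1 = W n tp 1 1
  · have hP01 : (permsUpTo n).filter (fun z => QLe ⟨k, sp⟩ z ∧ QLe z (W n tp 0 1))
        = (permsUpTo n).filter (fun z => QLe ⟨k, sp⟩ z ∧ QLe z (W n tp 1 1)) := by
      rw [hcons]
    have hzero : qMu (⟨k, sp⟩ : QPerm) (⟨n, tp⟩ : QPerm) = 0 := by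
      rw [hμrec, hsplit, hP01, Finset.union_self, hsum1]
      simp
    have hNC : ¬ NotConsecFirstTwo ⟨n, tp⟩ := fun hnc => (ncft_iff hn3).mp hnc hcons
    constructor
    · rintro ⟨_, hncft⟩
      exact absurd hncft hNC
    · intro _
      exact hzero
  · have hQeq : ((permsUpTo n).filter (fun z => QLe ⟨k, sp⟩ z ∧ QLe z (W n tp 0 1)))
        ∩ ((permsUpTo n).filter (fun z => QLe ⟨k, sp⟩ z ∧ QLe z (W n tp 1 1)))
        = (permsUpTo n).filter (fun z => QLe ⟨k, sp⟩ z ∧ QLe z (W n tp 2 2)) := by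
      ext z
      rw [Finset.mem_inter, Finset.mem_filter, Finset.mem_filter, Finset.mem_filter]
      constructor
      · rintro ⟨⟨hm, ha, hb⟩, ⟨hm2, ha2, hb2⟩⟩
        exact ⟨hm, ha,
          lemB f hfc huniqc hlast hcons hn3 hk1 n 1 z (le_refl 1) (by omega) ha hb hb2⟩
      · rintro ⟨hm, ha, hb⟩
        exact ⟨⟨hm, ha, qle_trans hb hW22_01⟩, hm, ha, qle_trans hb hW22_11⟩
    have hincl := Finset.sum_union_inter
      (s₁ := (permsUpTo n).filter (fun z => QLe ⟨k, sp⟩ z ∧ QLe z (W n tp 0 1)))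
      (s₂ := (permsUpTo n).filter (fun z => QLe ⟨k, sp⟩ z ∧ QLe z (W n tp 1 1)))
      (f := fun z => qMu ⟨k, sp⟩ z)
    rw [hQeq, hsum0, hsum1] at hincl
    have hsumQ : ∑ z ∈ (permsUpTo n).filter
        (fun z => QLe ⟨k, sp⟩ z ∧ QLe z (W n tp 2 2)), qMu ⟨k, sp⟩ z
        = if W n tp 2 2 = (⟨k, sp⟩ : QPerm) then 1 else 0 :=
      sum_qMu_interval ⟨k, sp⟩ (W n tp 2 2) n (by show n - 2 ≤ n; omega)
    have hNC : NotConsecFirstTwo ⟨n, tp⟩ := (ncft_iff hn3).mpr hcons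
    by_cases hr : n - k = 2
    · have hπσ : W n tp 2 2 = (⟨k, sp⟩ : QPerm) := by
        have hk2 : k = n - 2 := by omega
        subst hk2
        have hfE : ∀ x : Fin (n - 2), f x = Emb n 2 2 x := by
          intro x
          apply Fin.ext
          by_cases hx : (x : ℕ) = 0
          · rw [fv_eq' f x, hx, Emb_val0 (by omega) hx]
            omega
          · rw [fv_eq' f x, Emb_val1 hx, htail (x : ℕ) x.isLt (by omega)]
            omega
        refine congrArg (fun p => (⟨n - 2, p⟩ : QPerm)) ?_
        refine (eq_patt (Emb_sm (le_refl 2)).injective ?_).symm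
        intro x y
        rw [← hfE x, ← hfE y]
        exact hfc.2.1 x y
      have hone : qMu (⟨k, sp⟩ : QPerm) (⟨n, tp⟩ : QPerm) = 1 := by
        rw [hμrec, hsplit]
        rw [hsumQ, if_pos hπσ] at hincl
        have hsumU : ∑ z ∈ ((permsUpTo n).filter
              (fun z => QLe ⟨k, sp⟩ z ∧ QLe z (W n tp 0 1)))
            ∪ ((permsUpTo n).filter (fun z => QLe ⟨k, sp⟩ z ∧ QLe z (W n tp 1 1))),
            qMu ⟨k, sp⟩ z = -1 := by omega
        rw [hsumU]
        norm_num
      refine ⟨fun _ => hone, fun hcon => absurd ⟨?_, hNC⟩ hcon⟩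
      show n - k = 2
      exact hr
    · have hπσ : W n tp 2 2 ≠ (⟨k, sp⟩ : QPerm) := by
        intro hcon
        have hcc : n - 2 = k := congrArg Sigma.fst hcon
        omega
      have hzero : qMu (⟨k, sp⟩ : QPerm) (⟨n, tp⟩ : QPerm) = 0 := by
        rw [hμrec, hsplit]
        rw [hsumQ, if_neg hπσ] at hincl
        have hsumU : ∑ z ∈ ((permsUpTo n).filter
              (fun z => QLe ⟨k, sp⟩ z ∧ QLe z (W n tp 0 1)))
            ∪ ((permsUpTo n).filter (fun z => QLe ⟨k, sp⟩ z ∧ QLe z (W n tp 1 1))),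
            qMu ⟨k, sp⟩ z = 0 := by omega
        rw [hsumU]
        norm_num
      refine ⟨fun hcon => ?_, fun _ => hzero⟩
      exfalso
      exact hr hcon.1
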